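/- arXiv:2605.17155 — 2 statements merged into one kernel-verified Lean document; each statement's English description precedes it below -/
import Mathlib

section
/- Let B be a Banach space and f : ℕ → B be Bohr almost periodic. For every η > 0 there exists L = L(f, η) such that for every h ≥ 0 there is r ∈ {0, …, L} with sup_{m≥0} ‖(f(m+h) − f(h)) − (f(m+r) − f(r))‖ < η. -/
def BohrAP {B : Type*} [NormedAddCommGroup B] (f : ℕ → B) : Prop :=
  ∀ ε > (0 : ℝ), ∃ L : ℕ, ∀ a : ℕ, ∃ τ : ℕ,
    1 ≤ τ ∧ a + 1 ≤ τ ∧ τ ≤ a + L ∧ ∀ n, ‖f (n + τ) - f n‖ < ε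

theorem stmt_4 {B : Type*} [NormedAddCommGroup B] (f : ℕ → B) (hf : BohrAP f) :
    ∀ η > (0 : ℝ), ∃ L : ℕ, ∀ h : ℕ, ∃ r : ℕ, r ≤ L ∧
      ∀ m : ℕ, ‖(f (m + h) - f h) - (f (m + r) - f r)‖ < η := by
  intro η hη
  obtain ⟨L, hL⟩ := hf (η / 2) (by linarith)
  refine ⟨L, fun h => ?_⟩
  by_cases hh : h ≤ L
  · exact ⟨h, hh, fun m => by simpa using hη⟩
  · push_neg at hh
    obtain ⟨τ, hτ1, hτ2, hτ3, hτ4⟩ := hL (h - L)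
    have hτh : τ ≤ h := by omega
    refine ⟨h - τ, by omega, fun m => ?_⟩
    have e1 : m + h = (m + (h - τ)) + τ := by omega
    have e2 : h = (h - τ) + τ := by omega
    have key : (f (m + h) - f h) - (f (m + (h - τ)) - f (h - τ)) =
        (f ((m + (h - τ)) + τ) - f (m + (h - τ))) - (f ((h - τ) + τ) - f (h - τ)) := by
      rw [← e1, ← e2]; abel
    rw [key]
    calc ‖_ - _‖ ≤ ‖f ((m + (h - τ)) + τ) - f (m + (h - τ))‖ + ‖f ((h - τ) + τ) - f (h - τ)‖ :=
          norm_sub_le _ _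
      _ < η / 2 + η / 2 := add_lt_add (hτ4 _) (hτ4 _)
      _ = η := by ring
end

section
/- Let S be a measurable space, A ⊆ S measurable, and T, S_c : S → S measurable maps. Let X be an S-valued random element with T X equal in distribution to S_c X. Assume ℙ(X ∈ A) > 0, A ⊆ T⁻¹(A), and S_c⁻¹(A) = A. Then under the conditional probability ℚ = ℙ(· | X ∈ A), T X is equal in distribution to S_c X; that is, for every bounded measurable F : S → ℝ, E[F(T X) 1_{X∈A}] = E[F(S_c X) 1_{X∈A}]. -/
open MeasureTheory

theorem stmt_8 {Ω S : Type*} [MeasurableSpace Ω] [MeasurableSpace S]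
    (ℙ : Measure Ω) [IsProbabilityMeasure ℙ]
    (A : Set S) (hA : MeasurableSet A)
    (T Sc : S → S) (hT : Measurable T) (hSc : Measurable Sc)
    (X : Ω → S) (hX : Measurable X)
    (hdist : Measure.map (fun ω => T (X ω)) ℙ = Measure.map (fun ω => Sc (X ω)) ℙ)
    (hpos : 0 < ℙ (X ⁻¹' A))
    (hTA : A ⊆ T ⁻¹' A) (hScA : Sc ⁻¹' A = A) :
    ∀ F : S → ℝ, Measurable F → (∃ C : ℝ, ∀ s, |F s| ≤ C) →
      ∫ ω in X ⁻¹' A, F (T (X ω)) ∂ℙ = ∫ ω in X ⁻¹' A, F (Sc (X ω)) ∂ℙ := by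
  intro F hF _
  have hTX : Measurable fun ω => T (X ω) := hT.comp hX
  have hScX : Measurable fun ω => Sc (X ω) := hSc.comp hX
  -- Sc preimage set equals X ⁻¹' A
  have hScset : (fun ω => Sc (X ω)) ⁻¹' A = X ⁻¹' A := by
    show X ⁻¹' (Sc ⁻¹' A) = X ⁻¹' A
    rw [hScA]
  -- measures of the T preimage set
  have hmT : ℙ ((fun ω => T (X ω)) ⁻¹' A) = ℙ (X ⁻¹' A) := by
    have h1 : Measure.map (fun ω => T (X ω)) ℙ A = Measure.map (fun ω => Sc (X ω)) ℙ A := by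
      rw [hdist]
    rw [Measure.map_apply hTX hA, Measure.map_apply hScX hA] at h1
    rw [h1, hScset]
  have hsub : X ⁻¹' A ⊆ (fun ω => T (X ω)) ⁻¹' A := fun ω hω => hTA hω
  -- the two sets are a.e. equal
  have hae : X ⁻¹' A =ᵐ[ℙ] (fun ω => T (X ω)) ⁻¹' A := by
    rw [MeasureTheory.ae_eq_set]
    constructor
    · rw [Set.diff_eq_empty.mpr hsub]; simp
    · have hd : ℙ (((fun ω => T (X ω)) ⁻¹' A) \ (X ⁻¹' A)) = 0 := by
        have := measure_diff hsub (hX hA).nullMeasurableSet (measure_ne_top ℙ _)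
        rw [this, hmT, tsub_self]
      exact hd
  calc ∫ ω in X ⁻¹' A, F (T (X ω)) ∂ℙ
      = ∫ ω in (fun ω => T (X ω)) ⁻¹' A, F (T (X ω)) ∂ℙ :=
        setIntegral_congr_set hae
    _ = ∫ s in A, F s ∂(Measure.map (fun ω => T (X ω)) ℙ) :=
        (setIntegral_map hA hF.aestronglyMeasurable hTX.aemeasurable).symm
    _ = ∫ s in A, F s ∂(Measure.map (fun ω => Sc (X ω)) ℙ) := by rw [hdist]
    _ = ∫ ω in (fun ω => Sc (X ω)) ⁻¹' A, F (Sc (X ω)) ∂ℙ :=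
        setIntegral_map hA hF.aestronglyMeasurable hScX.aemeasurable
    _ = ∫ ω in X ⁻¹' A, F (Sc (X ω)) ∂ℙ := by rw [hScset]
end
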